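/- A string w of length 2n is a square if and only if there exists a perfect matching M on the positions {1,…,2n} of w such that (1) every edge {j,k} of M with j < k joins two equal symbols w_j = w_k, and (2) M is non-nesting: there are no two edges {j,ℓ} and {p,q} of M with j < p < q < ℓ. -/

import Mathlib

/-- `Shuffle u v w` : `w` is an interleaving of `u` and `v`
preserving the internal order of each. -/
inductive Shuffle {α : Type*} : List α → List α → List α → Prop
  | nil : Shuffle [] [] []
  | left {u v w : List α} (a : α) : Shuffle u v w → Shuffle (a :: u) v (a :: w)
  | right {u v w : List α} (a : α) : Shuffle u v w → Shuffle u (a :: v) (a :: w)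

lemma Shuffle.map_ {α β : Type*} (g : α → β) {u v w : List α} (h : Shuffle u v w) :
    Shuffle (u.map g) (v.map g) (w.map g) := by
  induction h with
  | nil => exact Shuffle.nil
  | left a _ ih => exact Shuffle.left (g a) ih
  | right a _ ih => exact Shuffle.right (g a) ih

lemma shuffle_filter {β : Type*} (p : β → Bool) : ∀ l : List β,
    Shuffle (l.filter p) (l.filter (fun x => !p x)) l
  | [] => Shuffle.nil
  | a :: l => by
    by_cases h : p a
    · simpa [List.filter_cons, h] using Shuffle.left a (shuffle_filter p l)
    · simpa [List.filter_cons, h] using Shuffle.right a (shuffle_filter p l)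

lemma shuffle_coloring {α : Type*} {u v w : List α} (h : Shuffle u v w) :
    ∃ c : List Bool, c.length = w.length ∧
      ((w.zip c).filter (fun x => x.2)).map Prod.fst = u ∧
      ((w.zip c).filter (fun x => !x.2)).map Prod.fst = v := by
  induction h with
  | nil => exact ⟨[], rfl, rfl, rfl⟩
  | left a _ ih =>
    obtain ⟨c, hc, h1, h2⟩ := ih
    exact ⟨true :: c, by simp [hc], by simp [h1], by simp [h2]⟩
  | right a _ ih =>
    obtain ⟨c, hc, h1, h2⟩ := ih
    exact ⟨false :: c, by simp [hc], by simp [h1], by simp [h2]⟩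


lemma exists_matching {α : Type*} (w : List α) (iu iv : List (Fin w.length))
    (hsu : iu.Pairwise (· < ·)) (hsv : iv.Pairwise (· < ·))
    (hlen : iu.length = iv.length)
    (hdisj : ∀ x, x ∈ iu → x ∈ iv → False)
    (hcov : ∀ x, x ∈ iu ∨ x ∈ iv)
    (heq : iu.map w.get = iv.map w.get) :
    ∃ f : Fin w.length → Fin w.length,
        Function.Involutive f ∧ (∀ i, f i ≠ i) ∧ (∀ i, w.get i = w.get (f i)) ∧
        (∀ j p : Fin w.length, j < p → p < f p → f p < f j → False) := by
  have hnu : iu.Nodup := hsu.nodup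
  have hnv : iv.Nodup := hsv.nodup
  have hbu : ∀ x, x ∈ iu → List.idxOf x iu < iv.length :=
    fun x h => hlen ▸ List.idxOf_lt_length_iff.2 h
  have hbv : ∀ x, x ∈ iv → List.idxOf x iv < iu.length :=
    fun x h => hlen.symm ▸ List.idxOf_lt_length_iff.2 h
  have hmemv : ∀ x, x ∉ iu → x ∈ iv := fun x h => (hcov x).resolve_left h
  obtain ⟨f, hedge⟩ : ∃ f : Fin w.length → Fin w.length, ∀ x,
      ∃ k, ∃ (h1 : k < iu.length) (h2 : k < iv.length),
        (x = iu.get ⟨k, h1⟩ ∧ f x = iv.get ⟨k, h2⟩) ∨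
        (x = iv.get ⟨k, h2⟩ ∧ f x = iu.get ⟨k, h1⟩) := by
    refine ⟨fun x => if h : x ∈ iu then iv.get ⟨List.idxOf x iu, hbu x h⟩
        else iu.get ⟨List.idxOf x iv, hbv x (hmemv x h)⟩, fun x => ?_⟩
    by_cases hx : x ∈ iu
    · exact ⟨List.idxOf x iu, List.idxOf_lt_length_iff.2 hx, hbu x hx,
        Or.inl ⟨(List.idxOf_get _).symm, by simp only [dif_pos hx]⟩⟩
    · exact ⟨List.idxOf x iv, hbv x (hmemv x hx),
        List.idxOf_lt_length_iff.2 (hmemv x hx),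
        Or.inr ⟨(List.idxOf_get _).symm, by simp only [dif_neg hx]⟩⟩
  have hmu : ∀ k l (hk : k < iu.length) (hl : l < iu.length), k < l →
      iu.get ⟨k, hk⟩ < iu.get ⟨l, hl⟩ := by
    intro k l hk hl h
    exact List.pairwise_iff_get.1 hsu ⟨k, hk⟩ ⟨l, hl⟩ h
  have hmv : ∀ k l (hk : k < iv.length) (hl : l < iv.length), k < l →
      iv.get ⟨k, hk⟩ < iv.get ⟨l, hl⟩ := by
    intro k l hk hl h
    exact List.pairwise_iff_get.1 hsv ⟨k, hk⟩ ⟨l, hl⟩ h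
  refine ⟨f, ?_, ?_, ?_, ?_⟩
  · -- involutive
    intro x
    obtain ⟨k, h1, h2, hor⟩ := hedge x
    obtain ⟨l, g1, g2, gor⟩ := hedge (f x)
    rcases hor with ⟨hx, hfx⟩ | ⟨hx, hfx⟩
    · rcases gor with ⟨gx, gfx⟩ | ⟨gx, gfx⟩
      · exact absurd (hdisj (f x) (gx ▸ List.get_mem _ _) (hfx ▸ List.get_mem _ _)) not_false
      · have hkl : k = l := by
          have e : iv.get ⟨k, h2⟩ = iv.get ⟨l, g2⟩ := hfx.symm.trans gx
          simpa [Fin.ext_iff] using (List.Nodup.get_inj_iff hnv).1 e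
        subst hkl
        rw [gfx, hx]
    · rcases gor with ⟨gx, gfx⟩ | ⟨gx, gfx⟩
      · have hkl : k = l := by
          have e : iu.get ⟨k, h1⟩ = iu.get ⟨l, g1⟩ := hfx.symm.trans gx
          simpa [Fin.ext_iff] using (List.Nodup.get_inj_iff hnu).1 e
        subst hkl
        rw [gfx, hx]
      · exact absurd (hdisj (f x) (hfx ▸ List.get_mem _ _) (gx ▸ List.get_mem _ _)) not_false
  · -- fixed point free
    intro x hfx
    obtain ⟨k, h1, h2, hor⟩ := hedge x
    rcases hor with ⟨hx, hfx'⟩ | ⟨hx, hfx'⟩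
    · refine hdisj x ?_ ?_
      · rw [hx]; exact List.get_mem _ _
      · rw [← hfx, hfx']; exact List.get_mem _ _
    · refine hdisj x ?_ ?_
      · rw [← hfx, hfx']; exact List.get_mem _ _
      · rw [hx]; exact List.get_mem _ _
  · -- letters
    intro x
    obtain ⟨k, h1, h2, hor⟩ := hedge x
    have e1 := List.get_of_eq heq ⟨k, by simpa using h1⟩
    simp only [List.get_eq_getElem, List.getElem_map, Fin.cast_mk] at e1
    rcases hor with ⟨hx, hfx⟩ | ⟨hx, hfx⟩ <;> rw [hfx, hx]
    · exact e1
    · exact e1.symm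
  · -- non-nesting
    intro j p hjp hp hpj
    obtain ⟨k, k1, k2, hk⟩ := hedge j
    obtain ⟨l, l1, l2, hl⟩ := hedge p
    rcases Nat.lt_trichotomy k l with h | h | h
    · have m1 := hmu k l k1 l1 h
      have m2 := hmv k l k2 l2 h
      rcases hk with ⟨e1, e2⟩ | ⟨e1, e2⟩ <;> rcases hl with ⟨e3, e4⟩ | ⟨e3, e4⟩ <;>
        simp only [Fin.lt_def, Fin.ext_iff] at hjp hp hpj m1 m2 e1 e2 e3 e4 <;> omega
    · subst h
      have r1 : iu.get ⟨k, k1⟩ = iu.get ⟨k, l1⟩ := rfl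
      have r2 : iv.get ⟨k, k2⟩ = iv.get ⟨k, l2⟩ := rfl
      rcases hk with ⟨e1, e2⟩ | ⟨e1, e2⟩ <;> rcases hl with ⟨e3, e4⟩ | ⟨e3, e4⟩ <;>
        simp only [Fin.lt_def, Fin.ext_iff] at hjp hp hpj e1 e2 e3 e4 r1 r2 <;> omega
    · have m1 := hmu l k l1 k1 h
      have m2 := hmv l k l2 k2 h
      rcases hk with ⟨e1, e2⟩ | ⟨e1, e2⟩ <;> rcases hl with ⟨e3, e4⟩ | ⟨e3, e4⟩ <;>
        simp only [Fin.lt_def, Fin.ext_iff] at hjp hp hpj m1 m2 e1 e2 e3 e4 <;> omega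


/-- a string of length `2n` is a square iff there is a
non-nesting perfect matching of its positions joining equal symbols.
The matching is given as a fixed-point-free involution `f`; the edge through
`i` is `{i, f i}`.  Non-nesting: there are no edges `{j, ℓ}`, `{p, q}` with
`j < p < q < ℓ`. -/
theorem square_iff_nonNesting_matching {α : Type*} {n : ℕ} (w : List α)
    (hw : w.length = 2 * n) :
    (∃ u : List α, Shuffle u u w) ↔
      ∃ f : Fin w.length → Fin w.length,
        Function.Involutive f ∧
        (∀ i, f i ≠ i) ∧
        (∀ i, w.get i = w.get (f i)) ∧
        (∀ j p : Fin w.length, j < p → p < f p → f p < f j → False) := by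
  constructor
  · rintro ⟨u, hu⟩
    obtain ⟨c, hc, h1, h2⟩ := shuffle_coloring hu
    set P : Fin w.length → Bool := fun i => c.get (Fin.cast hc.symm i) with hP
    set iu : List (Fin w.length) := (List.finRange w.length).filter (fun i => P i) with hiu
    set iv : List (Fin w.length) := (List.finRange w.length).filter (fun i => !P i) with hiv
    have hz : w.zip c = (List.finRange w.length).map (fun i => (w.get i, P i)) := by
      apply List.ext_getElem
      · simp [hc]
      · intro i hh1 hh2
        simp [List.getElem_zip, hP, List.get_eq_getElem]
    have key1 : ((w.zip c).filter (fun x => x.2)).map Prod.fst = iu.map w.get := by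
      rw [hz, List.filter_map, List.map_map]; rfl
    have key2 : ((w.zip c).filter (fun x => !x.2)).map Prod.fst = iv.map w.get := by
      rw [hz, List.filter_map, List.map_map]; rfl
    rw [key1] at h1
    rw [key2] at h2
    have heq : iu.map w.get = iv.map w.get := h1.trans h2.symm
    have hlen : iu.length = iv.length := by
      have := congrArg List.length heq
      simpa using this
    refine exists_matching w iu iv ?_ ?_ hlen ?_ ?_ heq
    · exact (List.pairwise_lt_finRange _).filter _
    · exact (List.pairwise_lt_finRange _).filter _
    · intro x hx hx'
      rw [hiu, List.mem_filter] at hx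
      rw [hiv, List.mem_filter] at hx'
      simp [hx.2] at hx'
    · intro x
      by_cases h : P x
      · left; rw [hiu, List.mem_filter]; simp [h]
      · right; rw [hiv, List.mem_filter]; simp [h]
  · rintro ⟨f, hinv, hfpf, hlet, hnn⟩
    set P : Fin w.length → Bool := fun i => decide (i < f i) with hP
    set O : List (Fin w.length) := (List.finRange w.length).filter (fun i => P i) with hO
    set C : List (Fin w.length) := (List.finRange w.length).filter (fun i => !P i) with hC
    have hmemO : ∀ x, x ∈ O ↔ x < f x := by
      intro x; rw [hO, List.mem_filter]; simp [hP]
    have hmemC : ∀ x, x ∈ C ↔ f x < x := by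
      intro x; rw [hC, List.mem_filter]
      simp only [List.mem_finRange, true_and, hP, Bool.not_eq_eq_eq_not, Bool.not_true,
        decide_eq_false_iff_not, not_lt]
      constructor
      · intro h; exact lt_of_le_of_ne h (fun e => hfpf x e)
      · intro h; exact le_of_lt h
    have hinj : Function.Injective f := hinv.injective
    have hsO : O.Pairwise (· < ·) := (List.pairwise_lt_finRange _).filter _
    have hsC : C.Pairwise (· < ·) := (List.pairwise_lt_finRange _).filter _
    -- f is strictly monotone on O
    have hmono : O.Pairwise (fun a b => f a < f b) := by
      refine List.Pairwise.imp_of_mem ?_ hsO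
      intro a b ha hb hab
      have ha' := (hmemO a).1 ha
      have hb' := (hmemO b).1 hb
      rcases lt_trichotomy (f a) (f b) with h | h | h
      · exact h
      · exact absurd (hinj h) (ne_of_lt hab)
      · exact absurd (hnn a b hab hb' h) not_false
    have hOC : O.map f = C := by
      have hnC : C.Nodup := hsC.nodup
      have hnOf : (O.map f).Nodup := (hsO.nodup).map hinj
      refine (fun hp hs => List.Perm.eq_of_pairwise (fun a b _ _ h h' => absurd h (lt_asymm h')) hs hsC hp) ?_ ?_
      · rw [List.perm_ext_iff_of_nodup hnOf hnC]
        intro x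
        simp only [List.mem_map, hmemC]
        constructor
        · rintro ⟨a, ha, rfl⟩
          rw [hinv a]
          exact (hmemO a).1 ha
        · intro h
          exact ⟨f x, (hmemO (f x)).2 (by rw [hinv x]; exact h), hinv x⟩
      · exact List.Pairwise.map f (fun a b h => h) hmono
    haveI : IsAntisymm (Fin w.length) (· < ·) :=
      ⟨fun a b h h' => absurd h (lt_asymm h')⟩
    refine ⟨O.map w.get, ?_⟩
    have base := Shuffle.map_ w.get (shuffle_filter (fun i => P i) (List.finRange w.length))
    rw [List.map_get_finRange] at base
    have : C.map w.get = O.map w.get := by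
      rw [← hOC, List.map_map]
      refine List.map_congr_left ?_
      intro a _
      exact (hlet a).symm
    rw [← hO, ← hC, this] at base
    exact base
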